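/- Let N ≥ 1 be an integer and f a real number with f ≥ 1/N. Then every complex root z of ch_N(z) = z^N − f·(z^{N−1} + ⋯ + z + 1) satisfies |z| < 1 + f, and ch_N has a real root λ with λ ≥ 1 + f − 1/N. Consequently the largest real root λ_max of ch_N satisfies 1 + f − 1/N ≤ λ_max < 1 + f. -/

import Mathlib

/-- `ch_N(z) = z^N - f·(z^{N-1} + ⋯ + z + 1)`, the characteristic polynomial of the
simple Leslie matrix of order `N` with constant fertility rate `f`, as a function on `ℂ`. -/
noncomputable def chLeslie (N : ℕ) (f : ℝ) (z : ℂ) : ℂ :=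
  z ^ N - (f : ℂ) * ∑ j ∈ Finset.range N, z ^ j

lemma chLeslie_real (N : ℕ) (f x : ℝ) :
    chLeslie N f (x : ℂ) = ((x ^ N - f * ∑ j ∈ Finset.range N, x ^ j : ℝ) : ℂ) := by
  unfold chLeslie
  push_cast
  ring

/-- If `N ≥ 1` and `f ≥ 1/N`, then every complex root of `ch_N` has modulus `< 1 + f`,
`ch_N` has a real root `λ ≥ 1 + f - 1/N`, and consequently any largest real root `λ_max`
satisfies `1 + f - 1/N ≤ λ_max < 1 + f`. -/
theorem chLeslie_root_bounds (N : ℕ) (hN : 1 ≤ N) (f : ℝ) (hf : 1 / (N : ℝ) ≤ f) :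
    (∀ z : ℂ, chLeslie N f z = 0 → ‖z‖ < 1 + f) ∧
    (∃ lam : ℝ, chLeslie N f (lam : ℂ) = 0 ∧ 1 + f - 1 / (N : ℝ) ≤ lam) ∧
    (∀ lmax : ℝ, chLeslie N f (lmax : ℂ) = 0 →
      (∀ μ : ℝ, chLeslie N f (μ : ℂ) = 0 → μ ≤ lmax) →
      1 + f - 1 / (N : ℝ) ≤ lmax ∧ lmax < 1 + f) := by
  have hNpos : (0 : ℝ) < N := by exact_mod_cast hN
  have hfpos : 0 < f := lt_of_lt_of_le (by positivity) hf
  -- Part 1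
  have part1 : ∀ z : ℂ, chLeslie N f z = 0 → ‖z‖ < 1 + f := by
    intro z hz
    by_contra hcon
    push_neg at hcon
    set r := ‖z‖ with hr
    have hr1 : 1 < r := by linarith
    have hrf : f ≤ r - 1 := by linarith
    have hzeq : z ^ N = (f : ℂ) * ∑ j ∈ Finset.range N, z ^ j := by
      have := sub_eq_zero.mp hz
      simpa [chLeslie, sub_eq_zero] using hz
    have h1 : r ^ N ≤ f * ∑ j ∈ Finset.range N, r ^ j := by
      calc r ^ N = ‖z ^ N‖ := by rw [norm_pow]
        _ = ‖(f : ℂ) * ∑ j ∈ Finset.range N, z ^ j‖ := by rw [hzeq]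
        _ = |f| * ‖∑ j ∈ Finset.range N, z ^ j‖ := by
              rw [norm_mul, Complex.norm_real, Real.norm_eq_abs]
        _ ≤ f * ∑ j ∈ Finset.range N, r ^ j := by
              rw [abs_of_pos hfpos]
              refine mul_le_mul_of_nonneg_left ?_ hfpos.le
              calc ‖∑ j ∈ Finset.range N, z ^ j‖
                  ≤ ∑ j ∈ Finset.range N, ‖z ^ j‖ :=
                    norm_sum_le _ _
                _ = ∑ j ∈ Finset.range N, r ^ j := by simp [norm_pow, hr]
    have hgeom : ∑ j ∈ Finset.range N, r ^ j = (r ^ N - 1) / (r - 1) :=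
      geom_sum_eq (by linarith) N
    rw [hgeom] at h1
    have hrn : (0 : ℝ) < r ^ N := by positivity
    rw [mul_div_assoc'] at h1
    have h2 : r ^ N * (r - 1) ≤ f * (r ^ N - 1) :=
      (le_div_iff₀ (by linarith : (0:ℝ) < r - 1)).mp h1
    nlinarith [hrn]
  -- Part 2
  set a := 1 + f - 1 / (N : ℝ) with ha
  have haone : 1 ≤ a := by
    have : 1 / (N : ℝ) ≤ f := hf
    simp only [ha]; linarith
  have part2 : ∃ lam : ℝ, chLeslie N f (lam : ℂ) = 0 ∧ a ≤ lam := by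
    set g : ℝ → ℝ := fun x => x ^ N - f * ∑ j ∈ Finset.range N, x ^ j with hg
    have hcont : Continuous g := by
      apply Continuous.sub (continuous_pow N)
      exact continuous_const.mul (continuous_finset_sum _ fun i _ => continuous_pow i)
    have hgtop : g (1 + f) = 1 := by
      have hne : (1 + f : ℝ) ≠ 1 := by linarith
      simp only [hg]
      rw [geom_sum_eq hne N]
      field_simp
      ring
    have hga : g a ≤ 0 := by
      rcases eq_or_lt_of_le haone with heq | hlt
      · -- a = 1, then f = 1/N, g 1 = 1 - f*N = 0
        have hfN : f = 1 / (N : ℝ) := by simp only [ha] at heq; linarith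
        simp only [hg]
        rw [← heq]
        simp only [one_pow, Finset.sum_const, Finset.card_range, nsmul_eq_mul, mul_one]
        rw [hfN, one_div, inv_mul_cancel₀ hNpos.ne']
        norm_num
      · have hane : a ≠ 1 := hlt.ne'
        have hgeom : ∑ j ∈ Finset.range N, a ^ j = (a ^ N - 1) / (a - 1) :=
          geom_sum_eq hane N
        have hbern : (N : ℝ) * f ≤ a ^ N := by
          have h0 : (-2 : ℝ) ≤ f - 1 / (N : ℝ) := by linarith
          have := one_add_mul_le_pow h0 N
          have ha' : a = 1 + (f - 1/(N:ℝ)) := by simp only [ha]; ring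
          rw [ha']
          calc (N : ℝ) * f = 1 + N * (f - 1/(N:ℝ)) := by
                field_simp
                ring
            _ ≤ (1 + (f - 1/(N:ℝ))) ^ N := this
        have hpos : 0 < a - 1 := by linarith
        have key : (a - 1) * g a ≤ 0 := by
          simp only [hg, hgeom]
          have : (a - 1) * (a ^ N - f * ((a ^ N - 1) / (a - 1)))
              = a ^ N * (a - 1 - f) + f := by
            field_simp
            ring
          rw [this]
          have hfa : a - 1 - f = -(1 / (N : ℝ)) := by simp only [ha]; ring
          rw [hfa]
          have hle : f ≤ a ^ N * (1 / (N : ℝ)) := by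
            rw [mul_one_div, le_div_iff₀ hNpos]
            nlinarith
          linarith
        nlinarith
    have hab : a ≤ 1 + f := by
      simp only [ha]; have : 0 < 1 / (N : ℝ) := by positivity
      linarith
    have hmem : (0 : ℝ) ∈ Set.Icc (g a) (g (1 + f)) := ⟨hga, by rw [hgtop]; norm_num⟩
    obtain ⟨lam, hlam, hglam⟩ :=
      intermediate_value_Icc hab (hcont.continuousOn) hmem
    refine ⟨lam, ?_, hlam.1⟩
    rw [chLeslie_real]
    exact_mod_cast hglam
  refine ⟨part1, part2, ?_⟩
  intro lmax hroot hmax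
  obtain ⟨lam, hlam0, hlamge⟩ := part2
  constructor
  · exact le_trans hlamge (hmax lam hlam0)
  · have := part1 (lmax : ℂ) hroot
    calc lmax ≤ |lmax| := le_abs_self _
      _ = ‖(lmax : ℂ)‖ := by rw [Complex.norm_real, Real.norm_eq_abs]
      _ < 1 + f := this
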